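/- There exists an equiareal 4-simplex in Euclidean 4-space whose centroid, circumcenter, and Fermat-Torricelli point are pairwise distinct. -/

import Mathlib

/-
Common geometric notions for simplices in Euclidean d-space, following
Edmonds–Hajja–Martini, "Coincidences of simplex centers and related facial
structures".  A d-simplex is given by its d+1 affinely independent vertices
`A : Fin (d+1) → EuclideanSpace ℝ (Fin d)`.
-/

noncomputable section

abbrev Pt (d : ℕ) : Type := EuclideanSpace ℝ (Fin d)

variable {d : ℕ}

/-- The centroid of the simplex with vertices `A`: the average of the vertices. -/
def ctr (A : Fin (d+1) → Pt d) : Pt d := Finset.centroid ℝ Finset.univ A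

/-- `C` is a circumcenter of the simplex with vertices `A`:
it is equidistant from all the vertices. -/
def IsCircumcenter (A : Fin (d+1) → Pt d) (C : Pt d) : Prop :=
  ∃ r : ℝ, ∀ i, dist C (A i) = r

/-- The affine span (hyperplane) of the facet opposite to vertex `j`. -/
def facetSpan (A : Fin (d+1) → Pt d) (j : Fin (d+1)) : Set (Pt d) :=
  (affineSpan ℝ (A '' {i | i ≠ j}) : Set (Pt d))

/-- `I` is the incenter of the simplex with vertices `A`: an interior point
equidistant from the affine hyperplanes spanned by the facets. -/
def IsIncenter (A : Fin (d+1) → Pt d) (I : Pt d) : Prop :=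
  I ∈ interior (convexHull ℝ (Set.range A)) ∧
    ∃ r : ℝ, ∀ j, Metric.infDist I (facetSpan A j) = r

/-- `F` is a Fermat-Torricelli point of the simplex with vertices `A`:
it minimizes the sum of the distances to the vertices. -/
def IsFermatPoint (A : Fin (d+1) → Pt d) (F : Pt d) : Prop :=
  ∀ Q : Pt d, ∑ i, dist F (A i) ≤ ∑ i, dist Q (A i)

/-- The altitude of the simplex at vertex `j`: the distance from `A j` to the
affine span of the opposite facet. -/
def altitude (A : Fin (d+1) → Pt d) (j : Fin (d+1)) : ℝ :=
  Metric.infDist (A j) (facetSpan A j)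

/-- Equiareal: all facets have the same `(d-1)`-dimensional volume; equivalently
(since `d · vol S = facet volume · altitude`), all altitudes are equal. -/
def Equiareal (A : Fin (d+1) → Pt d) : Prop :=
  ∀ j k, altitude A j = altitude A k

/-- `r` is the circumradius of the facet opposite `j`: some point of the affine
span of the facet is at distance `r` from all its vertices. -/
def IsFacetCircumradius (A : Fin (d+1) → Pt d) (j : Fin (d+1)) (r : ℝ) : Prop :=
  ∃ C ∈ affineSpan ℝ (A '' {i | i ≠ j}), ∀ i, i ≠ j → dist C (A i) = r

/-- Equiradial: all facets have the same circumradius. -/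
def Equiradial (A : Fin (d+1) → Pt d) : Prop :=
  ∃ r : ℝ, ∀ j, IsFacetCircumradius A j r

/-- Equifacetal: any two facets are congruent, i.e. there is an isometry of the
ambient space carrying the vertex set of one facet onto that of the other. -/
def Equifacetal (A : Fin (d+1) → Pt d) : Prop :=
  ∀ j k, ∃ f : Pt d ≃ᵢ Pt d, f '' (A '' {i | i ≠ j}) = A '' {i | i ≠ k}

/-- Regular: all edges have equal length. -/
def Regular (A : Fin (d+1) → Pt d) : Prop :=
  ∀ i j k l, i ≠ j → k ≠ l → dist (A i) (A j) = dist (A k) (A l)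

open RealInnerProductSpace

lemma inner4 (x y : Pt 4) : ⟪x, y⟫ = x 0 * y 0 + x 1 * y 1 + x 2 * y 2 + x 3 * y 3 := by
  simp [PiLp.inner_apply, RCLike.inner_apply, Fin.sum_univ_four]; ring

lemma dist_sq (x y : Pt 4) : dist x y ^ 2 = ⟪x - y, x - y⟫ := by
  rw [dist_eq_norm, real_inner_self_eq_norm_sq]

lemma eq_of_sq_eq {a b : ℝ} (ha : 0 ≤ a) (hb : 0 ≤ b) (h : a^2 = b^2) : a = b := by nlinarith

def sq239 : ℝ := Real.sqrt 239
lemma hs : sq239 ^ 2 = 239 := Real.sq_sqrt (by norm_num)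
lemma hs0 : 0 < sq239 := Real.sqrt_pos.2 (by norm_num)

def Av : Fin 5 → Pt 4 :=
  ![!₂[0,0,0,0], !₂[8*sq239, 0, -4, sq239], !₂[-8*sq239, 0, -4, sq239],
    !₂[0, 8*sq239, 4, sq239], !₂[0, -8*sq239, 4, sq239]]

@[simp] lemma cv2 {α : Type*} (a b c e : α) : ![a, b, c, e] 2 = c := rfl
@[simp] lemma cv3 {α : Type*} (a b c e : α) : ![a, b, c, e] 3 = e := rfl
@[simp] lemma cv52 {α : Type*} (a b c e f : α) : ![a, b, c, e, f] 2 = c := rfl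
@[simp] lemma cv53 {α : Type*} (a b c e f : α) : ![a, b, c, e, f] 3 = e := rfl
@[simp] lemma cv54 {α : Type*} (a b c e f : α) : ![a, b, c, e, f] 4 = f := rfl

def innerL (n : Pt 4) : Pt 4 →ₗ[ℝ] ℝ where
  toFun y := ⟪n, y⟫
  map_add' a b := inner_add_right n a b
  map_smul' c y := by
    show ⟪n, c • y⟫ = (RingHom.id ℝ) c • ⟪n, y⟫
    rw [RingHom.id_apply, smul_eq_mul, real_inner_smul_right]

lemma infDist_facet {S : Set (Pt 4)} {x n p : Pt 4} {κ r : ℝ}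
    (hp : p ∈ affineSpan ℝ S)
    (hS : ∀ y ∈ S, ⟪n, y⟫ = κ)
    (hd : dist x p = r) (hr : 0 ≤ r)
    (hx : (⟪n, x⟫ - κ)^2 = r^2 * ⟪n, n⟫)
    (hn : 0 < ⟪n, n⟫) :
    Metric.infDist x (affineSpan ℝ S : Set (Pt 4)) = r := by
  have hspan : ∀ y ∈ affineSpan ℝ S, ⟪n, y⟫ = κ := by
    intro y hy
    have hle : affineSpan ℝ S ≤
        AffineSubspace.comap ((innerL n).toAffineMap) (affineSpan ℝ ({κ} : Set ℝ)) := by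
      rw [affineSpan_le]
      intro z hz
      show z ∈ (AffineSubspace.comap ((innerL n).toAffineMap) (affineSpan ℝ ({κ} : Set ℝ)) : Set (Pt 4))
      rw [SetLike.mem_coe, AffineSubspace.mem_comap]
      apply mem_affineSpan
      simp only [LinearMap.coe_toAffineMap, Set.mem_singleton_iff]
      exact hS z hz
    have h1 := hle hy
    rw [AffineSubspace.mem_comap] at h1
    have h2 := (AffineSubspace.mem_affineSpan_singleton _ _).1 h1
    simpa [innerL] using h2
  have hub : Metric.infDist x (affineSpan ℝ S : Set (Pt 4)) ≤ r :=
    hd ▸ Metric.infDist_le_dist_of_mem hp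
  have hlb : ∀ y ∈ (affineSpan ℝ S : Set (Pt 4)), r ≤ dist x y := by
    intro y hy
    have h1 : ⟪n, y⟫ = κ := hspan y hy
    have h2 : ⟪n, x - y⟫ = ⟪n, x⟫ - κ := by rw [inner_sub_right, h1]
    have h3 := real_inner_mul_inner_self_le n (x - y)
    have h4 : ⟪x - y, x - y⟫ = ‖x - y‖^2 := real_inner_self_eq_norm_sq _
    have h5 : dist x y = ‖x - y‖ := dist_eq_norm _ _
    have h6 : (⟪n, x⟫ - κ) * (⟪n, x⟫ - κ) ≤ ⟪n, n⟫ * ‖x - y‖^2 := by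
      rw [← h4, ← h2]; exact h3
    have h7 : r^2 ≤ ‖x - y‖^2 := by nlinarith [hn]
    rw [h5]
    nlinarith [norm_nonneg (x - y)]
  have hnlt : ¬ Metric.infDist x (affineSpan ℝ S : Set (Pt 4)) < r := by
    intro hlt
    obtain ⟨y, hy, hxy⟩ := (Metric.infDist_lt_iff ⟨p, hp⟩).1 hlt
    exact absurd hxy (not_lt.2 (hlb y hy))
  linarith [not_lt.1 hnlt]

lemma facet_infDist (j : Fin 5) (q : Fin 4 → Pt 4) (w : Fin 4 → ℝ) (n : Pt 4) (κ : ℝ) (p : Pt 4)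
    (hw : ∑ i, w i = 1)
    (hq : ∀ i : Fin 4, ∃ k : Fin 5, k ≠ j ∧ Av k = q i)
    (hcomb : ∑ i : Fin 4, w i • q i = p)
    (hS : ∀ k : Fin 5, k ≠ j → ⟪n, Av k⟫ = κ)
    (hd : dist (Av j) p = sq239)
    (hx : (⟪n, Av j⟫ - κ)^2 = 239 * ⟪n, n⟫)
    (hn : 0 < ⟪n, n⟫) :
    Metric.infDist (Av j) (affineSpan ℝ (Av '' {i | i ≠ j}) : Set (Pt 4)) = sq239 := by
  have hsub : Set.range q ⊆ Av '' {i | i ≠ j} := by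
    rintro _ ⟨i, rfl⟩
    obtain ⟨k, hk, hAk⟩ := hq i
    exact ⟨k, hk, hAk⟩
  have hp : p ∈ affineSpan ℝ (Av '' {i | i ≠ j}) := by
    have h2 := affineCombination_mem_affineSpan (k := ℝ) (s := Finset.univ) hw q
    rw [Finset.affineCombination_eq_linear_combination _ _ _ hw, hcomb] at h2
    exact affineSpan_mono ℝ hsub h2
  refine infDist_facet hp ?_ hd (le_of_lt hs0) (by rw [hs]; exact hx) hn
  rintro y ⟨k, hk, rfl⟩
  exact hS k hk

lemma alt_val : ∀ j, Metric.infDist (Av j) (affineSpan ℝ (Av '' {i | i ≠ j}) : Set (Pt 4)) = sq239 := by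
  intro j
  fin_cases j
  · refine facet_infDist 0 ![Av 1, Av 2, Av 3, Av 4] (fun _ => (1/4 : ℝ))
      !₂[0,0,0,1] sq239 !₂[0,0,0,sq239] (by norm_num [Fin.sum_univ_four]) ?_ ?_ ?_ ?_ ?_ ?_
    · intro i; fin_cases i
      exacts [⟨1, by decide, rfl⟩, ⟨2, by decide, rfl⟩, ⟨3, by decide, rfl⟩, ⟨4, by decide, rfl⟩]
    · ext t; simp [Av, Fin.sum_univ_four]; fin_cases t <;> simp <;> ring
    · intro k hk
      fin_cases k
      · simp at hk
      all_goals (rw [inner4]; norm_num [Av])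
    · apply eq_of_sq_eq dist_nonneg (le_of_lt hs0)
      rw [dist_sq, inner4, hs]; simp [Av]; nlinarith [hs]
    · rw [inner4, inner4]; simp [Av]; nlinarith [hs]
    · rw [inner4]; simp; try norm_num
  · refine facet_infDist 1 ![Av 0, Av 2, Av 3, Av 4] ![1/4, -127/128, 223/256, 223/256]
      !₂[1, 0, -sq239, 4] 0 !₂[127*sq239/16, 0, 175/16, 3*sq239/4]
      (by norm_num [Fin.sum_univ_four]) ?_ ?_ ?_ ?_ ?_ ?_
    · intro i; fin_cases i
      exacts [⟨0, by decide, rfl⟩, ⟨2, by decide, rfl⟩, ⟨3, by decide, rfl⟩, ⟨4, by decide, rfl⟩]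
    · ext t; simp [Av, Fin.sum_univ_four]; fin_cases t <;> simp <;> ring
    · intro k hk
      fin_cases k
      all_goals try simp at hk
      all_goals (rw [inner4]; norm_num [Av]; try ring)
    · apply eq_of_sq_eq dist_nonneg (le_of_lt hs0)
      rw [dist_sq, inner4, hs]; simp [Av]; nlinarith [hs]
    · rw [inner4, inner4]; simp [Av]; nlinarith [hs]
    · rw [inner4]; simp [hs]; nlinarith [hs]
  · refine facet_infDist 2 ![Av 0, Av 1, Av 3, Av 4] ![1/4, -127/128, 223/256, 223/256]
      !₂[-1, 0, -sq239, 4] 0 !₂[-(127*sq239/16), 0, 175/16, 3*sq239/4]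
      (by norm_num [Fin.sum_univ_four]) ?_ ?_ ?_ ?_ ?_ ?_
    · intro i; fin_cases i
      exacts [⟨0, by decide, rfl⟩, ⟨1, by decide, rfl⟩, ⟨3, by decide, rfl⟩, ⟨4, by decide, rfl⟩]
    · ext t; simp [Av, Fin.sum_univ_four]; fin_cases t <;> simp <;> ring
    · intro k hk
      fin_cases k
      all_goals try simp at hk
      all_goals (rw [inner4]; norm_num [Av]; try ring)
    · apply eq_of_sq_eq dist_nonneg (le_of_lt hs0)
      rw [dist_sq, inner4, hs]; simp [Av]; nlinarith [hs]
    · rw [inner4, inner4]; simp [Av]; nlinarith [hs]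
    · rw [inner4]; simp [hs]; nlinarith [hs]
  · refine facet_infDist 3 ![Av 0, Av 1, Av 2, Av 4] ![1/4, 223/256, 223/256, -127/128]
      !₂[0, 1, sq239, 4] 0 !₂[0, 127*sq239/16, -(175/16), 3*sq239/4]
      (by norm_num [Fin.sum_univ_four]) ?_ ?_ ?_ ?_ ?_ ?_
    · intro i; fin_cases i
      exacts [⟨0, by decide, rfl⟩, ⟨1, by decide, rfl⟩, ⟨2, by decide, rfl⟩, ⟨4, by decide, rfl⟩]
    · ext t; simp [Av, Fin.sum_univ_four]; fin_cases t <;> simp <;> ring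
    · intro k hk
      fin_cases k
      all_goals try simp at hk
      all_goals (rw [inner4]; norm_num [Av]; try ring)
    · apply eq_of_sq_eq dist_nonneg (le_of_lt hs0)
      rw [dist_sq, inner4, hs]; simp [Av]; nlinarith [hs]
    · rw [inner4, inner4]; simp [Av]; nlinarith [hs]
    · rw [inner4]; simp [hs]; nlinarith [hs]
  · refine facet_infDist 4 ![Av 0, Av 1, Av 2, Av 3] ![1/4, 223/256, 223/256, -127/128]
      !₂[0, -1, sq239, 4] 0 !₂[0, -(127*sq239/16), -(175/16), 3*sq239/4]
      (by norm_num [Fin.sum_univ_four]) ?_ ?_ ?_ ?_ ?_ ?_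
    · intro i; fin_cases i
      exacts [⟨0, by decide, rfl⟩, ⟨1, by decide, rfl⟩, ⟨2, by decide, rfl⟩, ⟨3, by decide, rfl⟩]
    · ext t; simp [Av, Fin.sum_univ_four]; fin_cases t <;> simp <;> ring
    · intro k hk
      fin_cases k
      all_goals try simp at hk
      all_goals (rw [inner4]; norm_num [Av]; try ring)
    · apply eq_of_sq_eq dist_nonneg (le_of_lt hs0)
      rw [dist_sq, inner4, hs]; simp [Av]; nlinarith [hs]
    · rw [inner4, inner4]; simp [Av]; nlinarith [hs]
    · rw [inner4]; simp [hs]; nlinarith [hs]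


lemma equiareal_Av : Equiareal Av := by
  intro j k
  show Metric.infDist _ _ = Metric.infDist _ _
  unfold facetSpan
  rw [alt_val j, alt_val k]

def Cv : Pt 4 := !₂[0, 0, 0, 15551/(2*sq239)]

lemma circum_Av : IsCircumcenter Av Cv := by
  refine ⟨dist Cv (Av 0), fun i => ?_⟩
  fin_cases i
  · rfl
  all_goals (
    apply eq_of_sq_eq dist_nonneg dist_nonneg
    rw [dist_sq, dist_sq, inner4, inner4]
    simp [Av, Cv]
    have hne : sq239 ≠ 0 := ne_of_gt hs0
    field_simp
    nlinarith [hs, hs0])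

lemma hA0 : Av 0 = 0 := by
  ext j; fin_cases j <;> simp [Av]

def D0 : ℝ := Real.sqrt 15551
lemma hD : D0 ^ 2 = 15551 := Real.sq_sqrt (by norm_num)
lemma hD0 : 0 < D0 := Real.sqrt_pos.2 (by norm_num)

lemma normAv (i : Fin 5) (hi : i ≠ 0) : ‖Av i‖ = D0 := by
  apply eq_of_sq_eq (norm_nonneg _) (le_of_lt hD0)
  rw [← real_inner_self_eq_norm_sq, inner4, hD]
  fin_cases i
  · simp at hi
  all_goals (norm_num [Av]; nlinarith [hs])

lemma fermat_Av : IsFermatPoint Av (Av 0) := by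
  intro Q
  have key : ∀ i : Fin 5, i ≠ 0 → ⟪Av i, Av i - Q⟫ ≤ D0 * dist Q (Av i) := by
    intro i hi
    have h1 := real_inner_le_norm (Av i) (Av i - Q)
    rw [normAv i hi] at h1
    have h2 : ‖Av i - Q‖ = dist Q (Av i) := by rw [← dist_eq_norm, dist_comm]
    rw [h2] at h1
    exact h1
  have k1 := key 1 (by decide)
  have k2 := key 2 (by decide)
  have k3 := key 3 (by decide)
  have k4 := key 4 (by decide)
  have hsum : ⟪Av 1, Av 1 - Q⟫ + ⟪Av 2, Av 2 - Q⟫ + ⟪Av 3, Av 3 - Q⟫ + ⟪Av 4, Av 4 - Q⟫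
      = 4*15551 - 4*sq239*(Q 3) := by
    simp only [inner_sub_right, inner4]
    norm_num [Av]
    nlinarith [hs]
  have hQ3 : (Q 3)^2 ≤ ‖Q‖^2 := by
    rw [← real_inner_self_eq_norm_sq, inner4]
    nlinarith [sq_nonneg (Q 0), sq_nonneg (Q 1), sq_nonneg (Q 2)]
  have h4s : 4*sq239 < D0 := by nlinarith [hs, hD, hs0, hD0]
  have habs : |Q 3| ≤ ‖Q‖ := by
    rw [← Real.sqrt_sq_eq_abs, ← Real.sqrt_sq (norm_nonneg Q)]
    exact Real.sqrt_le_sqrt hQ3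
  have hkey : 4*sq239*(Q 3) ≤ D0 * ‖Q‖ := by
    have t1 : 4*sq239*(Q 3) ≤ 4*sq239*|Q 3| :=
      mul_le_mul_of_nonneg_left (le_abs_self _) (by linarith [hs0])
    have t2 : 4*sq239*|Q 3| ≤ D0*|Q 3| :=
      mul_le_mul_of_nonneg_right (le_of_lt h4s) (abs_nonneg _)
    have t3 : D0*|Q 3| ≤ D0*‖Q‖ := mul_le_mul_of_nonneg_left habs (le_of_lt hD0)
    linarith
  have hd0 : dist Q (Av 0) = ‖Q‖ := by rw [hA0, dist_zero_right]
  have hdists : ∀ i : Fin 5, i ≠ 0 → dist (Av 0) (Av i) = D0 := by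
    intro i hi
    rw [hA0, dist_comm, dist_eq_norm, sub_zero]
    exact normAv i hi
  rw [Fin.sum_univ_five, Fin.sum_univ_five]
  rw [hdists 1 (by decide), hdists 2 (by decide), hdists 3 (by decide), hdists 4 (by decide),
    dist_self, hd0]
  nlinarith [k1, k2, k3, k4, hsum, hkey, hD0, hD, dist_nonneg (x := Q) (y := Av 1),
    dist_nonneg (x := Q) (y := Av 2), dist_nonneg (x := Q) (y := Av 3),
    dist_nonneg (x := Q) (y := Av 4), norm_nonneg Q]

lemma ctr_Av : ctr Av = !₂[0, 0, 0, 4*sq239/5] := by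
  unfold ctr
  rw [Finset.centroid_def]
  have hw : ∑ i : Fin 5, Finset.univ.centroidWeights ℝ i = 1 := by
    simp [Finset.centroidWeights_apply]
  rw [Finset.affineCombination_eq_linear_combination _ _ _ hw]
  ext t
  simp [Finset.centroidWeights_apply, Av, Fin.sum_univ_five]
  fin_cases t <;> simp <;> ring

lemma affInd_Av : AffineIndependent ℝ Av := by
  rw [affineIndependent_iff_of_fintype]
  intro w h0 hvs
  rw [Finset.weightedVSub_eq_linear_combination _ h0, Fin.sum_univ_five] at hvs
  have e : ∀ t : Fin 4, (w 0 • Av 0 + w 1 • Av 1 + w 2 • Av 2 + w 3 • Av 3 + w 4 • Av 4) t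
      = (0 : Pt 4) t := fun t => by rw [hvs]
  have e0 := e 0
  have e1 := e 1
  have e2 := e 2
  have e3 := e 3
  simp [Av] at e0 e1 e2 e3
  rw [Fin.sum_univ_five] at h0
  have h12 : w 1 = w 2 := by
    have : (8*sq239) * (w 1 - w 2) = 0 := by linear_combination e0
    have := (mul_eq_zero.1 this).resolve_left (ne_of_gt (by linarith [hs0] : (0:ℝ) < 8*sq239))
    linarith
  have h34 : w 3 = w 4 := by
    have : (8*sq239) * (w 3 - w 4) = 0 := by linear_combination e1
    have := (mul_eq_zero.1 this).resolve_left (ne_of_gt (by linarith [hs0] : (0:ℝ) < 8*sq239))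
    linarith
  have hsum4 : w 1 + w 2 + w 3 + w 4 = 0 := by
    have : sq239 * (w 1 + w 2 + w 3 + w 4) = 0 := by linear_combination e3
    have := (mul_eq_zero.1 this).resolve_left (ne_of_gt hs0)
    linarith
  intro i
  fin_cases i <;> (simp; linarith)

theorem statement13 :
    ∃ A : Fin 5 → Pt 4, AffineIndependent ℝ A ∧ Equiareal A ∧
      ∃ C F : Pt 4, IsCircumcenter A C ∧ IsFermatPoint A F ∧
        ctr A ≠ C ∧ C ≠ F ∧ ctr A ≠ F := by
  refine ⟨Av, affInd_Av, equiareal_Av, Cv, Av 0, circum_Av, fermat_Av, ?_, ?_, ?_⟩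
  · intro h
    rw [ctr_Av] at h
    have h3 : (4*sq239/5 : ℝ) = 15551/(2*sq239) := by
      have := congrArg (fun v : Pt 4 => v 3) h
      simpa [Cv] using this
    have := hs
    have := hs0
    field_simp at h3
    nlinarith
  · intro h
    rw [hA0] at h
    have h3 : (15551/(2*sq239) : ℝ) = 0 := by
      have := congrArg (fun v : Pt 4 => v 3) h
      simpa [Cv] using this
    have := hs0
    field_simp at h3
    simp at h3
  · intro h
    rw [ctr_Av, hA0] at h
    have h3 : (4*sq239/5 : ℝ) = 0 := by
      have := congrArg (fun v : Pt 4 => v 3) h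
      simpa using this
    have := hs0
    linarith
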